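/- For every p ∈ [0,1], if there exists a natural number n with T_n(p) < (√5 − 1)/2, then lim_{n→∞} T_n(p) = 0. -/

import Mathlib

open Set Filter Topology

noncomputable section

/-- The dyadic tile `[a/2^i, (a+1)/2^i] × [b/2^j, (b+1)/2^j]` as a subset of `ℝ × ℝ`. -/
def dyadicTile (i j a b : ℕ) : Set (ℝ × ℝ) :=
  Set.Icc ((a : ℝ) / 2 ^ i) (((a : ℝ) + 1) / 2 ^ i) ×ˢ
    Set.Icc ((b : ℝ) / 2 ^ j) (((b : ℝ) + 1) / 2 ^ j)

/-- `t` is a dyadic tile of order `n` contained in the unit square. -/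
def IsDyadicTile (n : ℕ) (t : Set (ℝ × ℝ)) : Prop :=
  ∃ i j a b : ℕ, i + j = n ∧ a < 2 ^ i ∧ b < 2 ^ j ∧ t = dyadicTile i j a b

/-- `F` is a tiling of the region `R` by dyadic tiles of order `n`:
a set of order-`n` tiles whose union is `R` and whose interiors are pairwise disjoint. -/
def IsTiling (n : ℕ) (F : Set (Set (ℝ × ℝ))) (R : Set (ℝ × ℝ)) : Prop :=
  (∀ t ∈ F, IsDyadicTile n t) ∧ ⋃₀ F = R ∧
    F.Pairwise fun s t => interior s ∩ interior t = ∅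

def unitSquare : Set (ℝ × ℝ) := Set.Icc (0 : ℝ) 1 ×ˢ Set.Icc (0 : ℝ) 1

/-- Index type for the dyadic tiles of order `n`: a shape `i` (width `2^{-i}`, height
`2^{-(n-i)}`) together with the horizontal and vertical positions. -/
abbrev TileIndex (n : ℕ) : Type :=
  Σ i : Fin (n + 1), Fin (2 ^ (i : ℕ)) × Fin (2 ^ (n - (i : ℕ)))

/-- The order-`n` tile corresponding to an index. -/
def tileOf (n : ℕ) (x : TileIndex n) : Set (ℝ × ℝ) :=
  dyadicTile (x.1 : ℕ) (n - (x.1 : ℕ)) (x.2.1 : ℕ) (x.2.2 : ℕ)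

/-- The set `S` of available order-`n` tiles admits a tiling of the unit square. -/
def TileableSquare (n : ℕ) (S : Finset (TileIndex n)) : Prop :=
  ∃ F : Set (Set (ℝ × ℝ)), (∀ t ∈ F, ∃ x ∈ S, t = tileOf n x) ∧ IsTiling n F unitSquare

open Classical in
/-- Probability of the event `E` when each of the `(n+1)·2^n` order-`n` dyadic tiles is
available independently with probability `p`. -/
def Pr (n : ℕ) (p : ℝ) (E : Finset (TileIndex n) → Prop) : ℝ :=
  ∑ S : Finset (TileIndex n),
    if E S then p ^ S.card * (1 - p) ^ ((n + 1) * 2 ^ n - S.card) else 0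

/-- `T n p`: the probability that some set of available order-`n` tiles tiles `[0,1]²`. -/
def T (n : ℕ) (p : ℝ) : ℝ := Pr n p (TileableSquare n)

/-- The critical probability `p_c`. -/
def pc : ℝ :=
  sInf {p : ℝ | p ∈ Set.Icc (0 : ℝ) 1 ∧ Tendsto (fun n => T n p) atTop (𝓝 1)}



section MuSection
open Finset

namespace DyadicMu

variable {α : Type*} [DecidableEq α] {β : Type*} [DecidableEq β]

/-- Expectation of `f` under the Bernoulli(p) product measure on subsets of `u`. -/
def mu (p : ℝ) (u : Finset α) (f : Finset α → ℝ) : ℝ :=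
  ∑ S ∈ u.powerset, p ^ S.card * (1 - p) ^ (u.card - S.card) * f S

lemma mu_congr {p : ℝ} {u : Finset α} {f g : Finset α → ℝ} (h : ∀ S, f S = g S) :
    mu p u f = mu p u g := by
  unfold mu; exact Finset.sum_congr rfl (fun S _ => by rw [h S])

lemma mu_insert {p : ℝ} {u : Finset α} {a : α} (ha : a ∉ u) (f : Finset α → ℝ) :
    mu p (insert a u) f
      = p * mu p u (fun S => f (insert a S)) + (1 - p) * mu p u f := by
  unfold mu
  rw [Finset.powerset_insert, Finset.sum_union]
  · have h1 : ∑ S ∈ u.powerset.image (insert a),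
        p ^ S.card * (1 - p) ^ ((insert a u).card - S.card) * f S
        = p * ∑ S ∈ u.powerset, p ^ S.card * (1 - p) ^ (u.card - S.card) * f (insert a S) := by
      rw [Finset.sum_image, Finset.mul_sum]
      · refine Finset.sum_congr rfl (fun S hS => ?_)
        have haS : a ∉ S := fun h => ha (Finset.mem_powerset.1 hS h)
        have h2 : (insert a S).card = S.card + 1 := Finset.card_insert_of_notMem haS
        have h3 : (insert a u).card = u.card + 1 := Finset.card_insert_of_notMem ha
        have h4 : S.card ≤ u.card := Finset.card_le_card (Finset.mem_powerset.1 hS)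
        rw [h2, h3]
        have : u.card + 1 - (S.card + 1) = u.card - S.card := by omega
        rw [this]; ring
      · intro S hS T hT hST
        have haS : a ∉ S := fun h => ha (Finset.mem_powerset.1 hS h)
        have haT : a ∉ T := fun h => ha (Finset.mem_powerset.1 hT h)
        rw [← Finset.erase_insert haS, ← Finset.erase_insert haT, hST]
    have h2 : ∑ S ∈ u.powerset,
        p ^ S.card * (1 - p) ^ ((insert a u).card - S.card) * f S
        = (1 - p) * ∑ S ∈ u.powerset, p ^ S.card * (1 - p) ^ (u.card - S.card) * f S := by
      rw [Finset.mul_sum]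
      refine Finset.sum_congr rfl (fun S hS => ?_)
      have h3 : (insert a u).card = u.card + 1 := Finset.card_insert_of_notMem ha
      have h4 : S.card ≤ u.card := Finset.card_le_card (Finset.mem_powerset.1 hS)
      rw [h3]
      have : u.card + 1 - S.card = (u.card - S.card) + 1 := by omega
      rw [this]; ring
    rw [h1, h2]; ring
  · rw [Finset.disjoint_right]
    intro S hS
    obtain ⟨S', hS', rfl⟩ := Finset.mem_image.1 hS
    intro hmem
    exact ha (Finset.mem_powerset.1 hmem (Finset.mem_insert_self a S'))

lemma mu_empty {p : ℝ} (f : Finset α → ℝ) : mu p ∅ f = f ∅ := by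
  unfold mu; simp

lemma mu_const {p : ℝ} (u : Finset α) (c : ℝ) : mu p u (fun _ => c) = c := by
  induction u using Finset.induction_on with
  | empty => simp [mu_empty]
  | insert _ _ ha ih => rw [mu_insert ha]; rw [ih]; ring

lemma mu_mono {p : ℝ} (hp0 : 0 ≤ p) (hp1 : p ≤ 1) (u : Finset α) {f g : Finset α → ℝ}
    (h : ∀ S, f S ≤ g S) : mu p u f ≤ mu p u g := by
  unfold mu
  refine Finset.sum_le_sum (fun S _ => ?_)
  have : (0:ℝ) ≤ p ^ S.card * (1 - p) ^ (u.card - S.card) :=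
    mul_nonneg (pow_nonneg hp0 _) (pow_nonneg (by linarith) _)
  exact mul_le_mul_of_nonneg_left (h S) this

/-- `f` depends only on the coordinates in `v`. -/
def DependsOn (f : Finset α → ℝ) (v : Finset α) : Prop := ∀ S, f S = f (S ∩ v)

lemma DependsOn.insert_of_not_mem {f : Finset α → ℝ} {v : Finset α} (hf : DependsOn f v)
    {a : α} (ha : a ∉ v) (S : Finset α) : f (insert a S) = f S := by
  rw [hf (insert a S), Finset.insert_inter_of_notMem ha, ← hf S]

lemma DependsOn.insert_comp {f : Finset α → ℝ} {v : Finset α} (hf : DependsOn f v)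
    {a : α} (ha : a ∈ v) : DependsOn (fun S => f (insert a S)) v := by
  intro S
  simp only
  rw [hf (insert a S), Finset.insert_inter_of_mem ha,
    hf (insert a (S ∩ v)), Finset.insert_inter_of_mem ha, Finset.inter_assoc,
    Finset.inter_self]

lemma mu_dependsOn {p : ℝ} {v : Finset α} (u : Finset α) :
    ∀ f : Finset α → ℝ, DependsOn f v → mu p u f = mu p (u ∩ v) f := by
  induction u using Finset.induction_on with
  | empty => simp
  | @insert a u ha ih =>
    intro f hf
    by_cases hav : a ∈ v
    · have hau : a ∉ u ∩ v := fun h => ha (Finset.mem_inter.1 h).1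
      rw [mu_insert ha, Finset.insert_inter_of_mem hav, mu_insert hau,
        ih _ (hf.insert_comp hav), ih f hf]
    · rw [mu_insert ha, Finset.insert_inter_of_notMem hav, ← ih f hf]
      rw [mu_congr (fun S => hf.insert_of_not_mem hav S)]
      ring

lemma mu_mul_of_disjoint {p : ℝ} {v w : Finset α} (hvw : Disjoint v w) (u : Finset α) :
    ∀ f g : Finset α → ℝ, DependsOn f v → DependsOn g w →
      mu p u (fun S => f S * g S) = mu p u f * mu p u g := by
  induction u using Finset.induction_on with
  | empty => simp [mu_empty]
  | @insert a u ha ih =>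
    intro f g hf hg
    by_cases hav : a ∈ v
    · have haw : a ∉ w := fun h => (Finset.disjoint_left.1 hvw) hav h
      have hgeq : ∀ S, g (insert a S) = g S := hg.insert_of_not_mem haw
      rw [mu_insert ha, mu_insert ha f, mu_insert ha g]
      have e1 : mu p u (fun S => f (insert a S) * g (insert a S))
          = mu p u (fun S => f (insert a S) * g S) :=
        mu_congr (fun S => by rw [hgeq S])
      rw [e1, ih _ _ (hf.insert_comp hav) hg, ih _ _ hf hg,
        mu_congr hgeq]
      ring
    · by_cases haw : a ∈ w
      · have hfeq : ∀ S, f (insert a S) = f S := hf.insert_of_not_mem hav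
        rw [mu_insert ha, mu_insert ha f, mu_insert ha g]
        have e1 : mu p u (fun S => f (insert a S) * g (insert a S))
            = mu p u (fun S => f S * g (insert a S)) :=
          mu_congr (fun S => by rw [hfeq S])
        rw [e1, ih _ _ hf (hg.insert_comp haw), ih _ _ hf hg,
          mu_congr hfeq]
        ring
      · have hfeq : ∀ S, f (insert a S) = f S := hf.insert_of_not_mem hav
        have hgeq : ∀ S, g (insert a S) = g S := hg.insert_of_not_mem haw
        rw [mu_insert ha, mu_insert ha f, mu_insert ha g]
        have e1 : mu p u (fun S => f (insert a S) * g (insert a S))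
            = mu p u (fun S => f S * g S) :=
          mu_congr (fun S => by rw [hfeq S, hgeq S])
        rw [e1, ih _ _ hf hg, mu_congr hfeq, mu_congr hgeq]
        ring

/-- Harris / FKG inequality for the Bernoulli product measure. -/
lemma mu_harris {p : ℝ} (hp0 : 0 ≤ p) (hp1 : p ≤ 1) (u : Finset α) :
    ∀ f g : Finset α → ℝ, Monotone f → Monotone g →
      mu p u f * mu p u g ≤ mu p u (fun S => f S * g S) := by
  induction u using Finset.induction_on with
  | empty => simp [mu_empty]
  | @insert a u ha ih =>
    intro f g hf hg
    have hfm : Monotone (fun S => f (insert a S)) :=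
      fun S T hST => hf (Finset.insert_subset_insert a hST)
    have hgm : Monotone (fun S => g (insert a S)) :=
      fun S T hST => hg (Finset.insert_subset_insert a hST)
    have hfup : mu p u f ≤ mu p u (fun S => f (insert a S)) :=
      mu_mono hp0 hp1 u (fun S => hf (Finset.subset_insert a S))
    have hgup : mu p u g ≤ mu p u (fun S => g (insert a S)) :=
      mu_mono hp0 hp1 u (fun S => hg (Finset.subset_insert a S))
    rw [mu_insert ha f, mu_insert ha g, mu_insert ha (fun S => f S * g S)]
    have h1 := ih _ _ hfm hgm
    have h2 := ih _ _ hf hg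
    nlinarith [mul_nonneg hp0 (by linarith : (0:ℝ) ≤ 1 - p),
      mul_nonneg (mul_nonneg hp0 (by linarith : (0:ℝ) ≤ 1 - p))
        (mul_nonneg (sub_nonneg.2 hfup) (sub_nonneg.2 hgup))]

/-- Relabeling along an embedding. -/
lemma mu_map {p : ℝ} (e : β ↪ α) (u : Finset β) (f : Finset β → ℝ) :
    mu p (u.map e) (fun S => f (S.preimage e e.injective.injOn)) = mu p u f := by
  unfold mu
  rw [Finset.card_map]
  refine Finset.sum_nbij' (fun S => S.preimage e e.injective.injOn)
    (fun S => S.map e) ?_ ?_ ?_ ?_ ?_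
  · intro S hS
    rw [Finset.mem_powerset] at hS ⊢
    intro x hx
    rw [Finset.mem_preimage] at hx
    have := hS hx
    rw [Finset.mem_map] at this
    obtain ⟨y, hy, hxy⟩ := this
    rwa [← e.injective hxy]
  · intro S hS
    rw [Finset.mem_powerset] at hS ⊢
    exact Finset.map_subset_map.2 hS
  · intro S hS
    rw [Finset.mem_powerset] at hS
    ext x
    simp only [Finset.mem_map, Finset.mem_preimage]
    constructor
    · rintro ⟨y, hy, rfl⟩; exact hy
    · intro hx
      have := hS hx
      rw [Finset.mem_map] at this
      obtain ⟨y, hy, rfl⟩ := this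
      exact ⟨y, hx, rfl⟩
  · intro S hS
    exact Finset.preimage_map e S
  · intro S hS
    have himg : (S.preimage e e.injective.injOn).map e = S := by
      ext x
      simp only [Finset.mem_map, Finset.mem_preimage]
      constructor
      · rintro ⟨y, hy, rfl⟩; exact hy
      · intro hx
        have := Finset.mem_powerset.1 hS hx
        rw [Finset.mem_map] at this
        obtain ⟨y, hy, rfl⟩ := this
        exact ⟨y, hx, rfl⟩
    have hcard := congrArg Finset.card himg
    rw [Finset.card_map] at hcard
    rw [hcard]



lemma mu_add {p : ℝ} (u : Finset α) (f g : Finset α → ℝ) :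
    mu p u (fun S => f S + g S) = mu p u f + mu p u g := by
  unfold mu
  rw [← Finset.sum_add_distrib]
  exact Finset.sum_congr rfl (fun S _ => by ring)

lemma mu_sub {p : ℝ} (u : Finset α) (f g : Finset α → ℝ) :
    mu p u (fun S => f S - g S) = mu p u f - mu p u g := by
  unfold mu
  rw [← Finset.sum_sub_distrib]
  exact Finset.sum_congr rfl (fun S _ => by ring)

end DyadicMu

end MuSection

section Bridge

lemma card_tileIndex (n : ℕ) : Fintype.card (TileIndex n) = (n + 1) * 2 ^ n := by
  rw [Fintype.card_sigma]
  have h : ∀ i : Fin (n + 1),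
      Fintype.card (Fin (2 ^ (i : ℕ)) × Fin (2 ^ (n - (i : ℕ)))) = 2 ^ n := by
    intro i
    rw [Fintype.card_prod, Fintype.card_fin, Fintype.card_fin, ← pow_add]
    congr 1
    have := i.isLt
    omega
  rw [Finset.sum_congr rfl (fun i _ => h i), Finset.sum_const, Finset.card_univ,
    Fintype.card_fin, smul_eq_mul]

open Classical in
lemma Pr_eq_mu (n : ℕ) (p : ℝ) (E : Finset (TileIndex n) → Prop) :
    Pr n p E = DyadicMu.mu p Finset.univ (fun S => if E S then (1 : ℝ) else 0) := by
  unfold Pr DyadicMu.mu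
  rw [← Finset.powerset_univ]
  refine Finset.sum_congr rfl (fun S _ => ?_)
  have hcard : (Finset.univ : Finset (TileIndex n)).card = (n + 1) * 2 ^ n := by
    rw [Finset.card_univ, card_tileIndex]
  rw [hcard]
  by_cases hE : E S <;> simp [hE]

end Bridge

section Embeddings

lemma tileIndex_ext {n : ℕ} {x y : TileIndex n} (h1 : (x.1 : ℕ) = (y.1 : ℕ))
    (h2 : (x.2.1 : ℕ) = (y.2.1 : ℕ)) (h3 : (x.2.2 : ℕ) = (y.2.2 : ℕ)) : x = y := by
  obtain ⟨⟨i, hi⟩, ⟨a, ha⟩, ⟨b, hb⟩⟩ := x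
  obtain ⟨⟨i', hi'⟩, ⟨a', ha'⟩, ⟨b', hb'⟩⟩ := y
  simp only at h1 h2 h3
  subst h1
  obtain rfl : a = a' := h2
  obtain rfl : b = b' := h3
  rfl

/-- Constructor for tile indices from raw natural numbers. -/
def mkTI (n i a b : ℕ) (hi : i < n + 1) (ha : a < 2 ^ i) (hb : b < 2 ^ (n - i)) :
    TileIndex n := ⟨⟨i, hi⟩, ⟨a, ha⟩, ⟨b, hb⟩⟩

@[simp] lemma mkTI_fst (n i a b : ℕ) (hi ha hb) : ((mkTI n i a b hi ha hb).1 : ℕ) = i := rfl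
@[simp] lemma mkTI_snd1 (n i a b : ℕ) (hi ha hb) : ((mkTI n i a b hi ha hb).2.1 : ℕ) = a := rfl
@[simp] lemma mkTI_snd2 (n i a b : ℕ) (hi ha hb) : ((mkTI n i a b hi ha hb).2.2 : ℕ) = b := rfl

lemma two_pow_succ_eq (i : ℕ) : 2 ^ (i + 1) = 2 ^ i + 2 ^ i := by ring

/-- Left-half embedding. -/
def upL (n : ℕ) : TileIndex n ↪ TileIndex (n + 1) where
  toFun x := mkTI (n + 1) ((x.1 : ℕ) + 1) (x.2.1 : ℕ) (x.2.2 : ℕ)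
    (by have := x.1.isLt; omega)
    (by have := x.2.1.isLt; have := two_pow_succ_eq (x.1 : ℕ); omega)
    (by have := x.2.2.isLt
        have h : n + 1 - ((x.1 : ℕ) + 1) = n - (x.1 : ℕ) := by omega
        rw [h]; exact this)
  inj' := by
    intro x y h
    have e1 := congrArg (fun z : TileIndex (n + 1) => (z.1 : ℕ)) h
    have e2 := congrArg (fun z : TileIndex (n + 1) => (z.2.1 : ℕ)) h
    have e3 := congrArg (fun z : TileIndex (n + 1) => (z.2.2 : ℕ)) h
    simp only [mkTI_fst, mkTI_snd1, mkTI_snd2] at e1 e2 e3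
    exact tileIndex_ext (by omega) e2 e3

/-- Right-half embedding. -/
def upR (n : ℕ) : TileIndex n ↪ TileIndex (n + 1) where
  toFun x := mkTI (n + 1) ((x.1 : ℕ) + 1) ((x.2.1 : ℕ) + 2 ^ (x.1 : ℕ)) (x.2.2 : ℕ)
    (by have := x.1.isLt; omega)
    (by have := x.2.1.isLt; have := two_pow_succ_eq (x.1 : ℕ); omega)
    (by have := x.2.2.isLt
        have h : n + 1 - ((x.1 : ℕ) + 1) = n - (x.1 : ℕ) := by omega
        rw [h]; exact this)
  inj' := by
    intro x y h
    have e1 := congrArg (fun z : TileIndex (n + 1) => (z.1 : ℕ)) h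
    have e2 := congrArg (fun z : TileIndex (n + 1) => (z.2.1 : ℕ)) h
    have e3 := congrArg (fun z : TileIndex (n + 1) => (z.2.2 : ℕ)) h
    simp only [mkTI_fst, mkTI_snd1, mkTI_snd2] at e1 e2 e3
    have h1 : (x.1 : ℕ) = (y.1 : ℕ) := by omega
    have hp : (2 : ℕ) ^ (x.1 : ℕ) = 2 ^ (y.1 : ℕ) := by rw [h1]
    exact tileIndex_ext h1 (by omega) e3

/-- Bottom-half embedding. -/
def upB (n : ℕ) : TileIndex n ↪ TileIndex (n + 1) where
  toFun x := mkTI (n + 1) (x.1 : ℕ) (x.2.1 : ℕ) (x.2.2 : ℕ)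
    (by have := x.1.isLt; omega)
    x.2.1.isLt
    (by have := x.2.2.isLt
        have h : 2 ^ (n - (x.1 : ℕ)) ≤ 2 ^ (n + 1 - (x.1 : ℕ)) :=
          Nat.pow_le_pow_right (by norm_num) (by omega)
        omega)
  inj' := by
    intro x y h
    have e1 := congrArg (fun z : TileIndex (n + 1) => (z.1 : ℕ)) h
    have e2 := congrArg (fun z : TileIndex (n + 1) => (z.2.1 : ℕ)) h
    have e3 := congrArg (fun z : TileIndex (n + 1) => (z.2.2 : ℕ)) h
    simp only [mkTI_fst, mkTI_snd1, mkTI_snd2] at e1 e2 e3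
    exact tileIndex_ext e1 e2 e3

/-- Top-half embedding. -/
def upT (n : ℕ) : TileIndex n ↪ TileIndex (n + 1) where
  toFun x := mkTI (n + 1) (x.1 : ℕ) (x.2.1 : ℕ) ((x.2.2 : ℕ) + 2 ^ (n - (x.1 : ℕ)))
    (by have := x.1.isLt; omega)
    x.2.1.isLt
    (by have := x.2.2.isLt
        have hle : (x.1 : ℕ) ≤ n := by have := x.1.isLt; omega
        have h : n + 1 - (x.1 : ℕ) = (n - (x.1 : ℕ)) + 1 := by omega
        rw [h, two_pow_succ_eq]
        omega)
  inj' := by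
    intro x y h
    have e1 := congrArg (fun z : TileIndex (n + 1) => (z.1 : ℕ)) h
    have e2 := congrArg (fun z : TileIndex (n + 1) => (z.2.1 : ℕ)) h
    have e3 := congrArg (fun z : TileIndex (n + 1) => (z.2.2 : ℕ)) h
    simp only [mkTI_fst, mkTI_snd1, mkTI_snd2] at e1 e2 e3
    have hp : (2 : ℕ) ^ (n - (x.1 : ℕ)) = 2 ^ (n - (y.1 : ℕ)) := by rw [e1]
    exact tileIndex_ext e1 e2 (by omega)

end Embeddings

section Geometry

/-- The four (closed) halves of the unit square. -/
def LH : Set (ℝ × ℝ) := Set.Icc (0:ℝ) (1/2) ×ˢ Set.Icc (0:ℝ) 1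
def RH : Set (ℝ × ℝ) := Set.Icc (1/2:ℝ) 1 ×ˢ Set.Icc (0:ℝ) 1
def BH : Set (ℝ × ℝ) := Set.Icc (0:ℝ) 1 ×ˢ Set.Icc (0:ℝ) (1/2)
def TH : Set (ℝ × ℝ) := Set.Icc (0:ℝ) 1 ×ˢ Set.Icc (1/2:ℝ) 1

lemma isDyadicTile_tileOf (n : ℕ) (x : TileIndex n) : IsDyadicTile n (tileOf n x) := by
  refine ⟨(x.1 : ℕ), n - (x.1 : ℕ), (x.2.1 : ℕ), (x.2.2 : ℕ), ?_, x.2.1.isLt, x.2.2.isLt, rfl⟩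
  have := x.1.isLt; omega

lemma corner_mem_dyadicTile (i j a b : ℕ) :
    (((a:ℝ) + 1) / 2 ^ i, (b:ℝ) / 2 ^ j) ∈ dyadicTile i j a b := by
  constructor
  · exact ⟨(div_le_div_iff_of_pos_right (by positivity)).2 (by linarith), le_refl _⟩
  · exact ⟨le_refl _, (div_le_div_iff_of_pos_right (by positivity)).2 (by linarith)⟩

lemma corner_mem_dyadicTile' (i j a b : ℕ) :
    ((a:ℝ) / 2 ^ i, ((b:ℝ) + 1) / 2 ^ j) ∈ dyadicTile i j a b := by
  constructor
  · exact ⟨le_refl _, (div_le_div_iff_of_pos_right (by positivity)).2 (by linarith)⟩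
  · exact ⟨(div_le_div_iff_of_pos_right (by positivity)).2 (by linarith), le_refl _⟩

lemma dyadic_le_one {i a : ℕ} (ha : a < 2 ^ i) : ((a:ℝ) + 1) / 2 ^ i ≤ 1 := by
  rw [div_le_one (by positivity)]
  have : (a:ℝ) + 1 ≤ ((2^i : ℕ) : ℝ) := by exact_mod_cast ha
  simpa using this

lemma dyadic_nonneg (i a : ℕ) : (0:ℝ) ≤ (a:ℝ) / 2 ^ i := by positivity

/-- Inclusion in the left half from the arithmetic condition. -/
lemma tile_subset_LH {i j a b : ℕ} (hb : b < 2 ^ j) (h : 2 * (a + 1) ≤ 2 ^ i) :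
    dyadicTile i j a b ⊆ LH := by
  apply Set.prod_mono
  · apply Set.Icc_subset_Icc (dyadic_nonneg i a)
    rw [div_le_div_iff₀ (by positivity) (by norm_num : (0:ℝ) < 2)]
    have : 2 * ((a:ℝ) + 1) ≤ ((2^i : ℕ) : ℝ) := by exact_mod_cast h
    push_cast at this ⊢
    linarith
  · exact Set.Icc_subset_Icc (dyadic_nonneg j b) (dyadic_le_one hb)

lemma tile_subset_RH {i j a b : ℕ} (ha : a < 2 ^ i) (hb : b < 2 ^ j) (h : 2 ^ i ≤ 2 * a) :
    dyadicTile i j a b ⊆ RH := by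
  apply Set.prod_mono
  · apply Set.Icc_subset_Icc _ (dyadic_le_one ha)
    rw [div_le_div_iff₀ (by norm_num : (0:ℝ) < 2) (by positivity)]
    have : ((2^i : ℕ) : ℝ) ≤ 2 * (a:ℝ) := by exact_mod_cast h
    push_cast at this ⊢
    linarith
  · exact Set.Icc_subset_Icc (dyadic_nonneg j b) (dyadic_le_one hb)

lemma tile_subset_BH {i j a b : ℕ} (ha : a < 2 ^ i) (h : 2 * (b + 1) ≤ 2 ^ j) :
    dyadicTile i j a b ⊆ BH := by
  apply Set.prod_mono
  · exact Set.Icc_subset_Icc (dyadic_nonneg i a) (dyadic_le_one ha)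
  · apply Set.Icc_subset_Icc (dyadic_nonneg j b)
    rw [div_le_div_iff₀ (by positivity) (by norm_num : (0:ℝ) < 2)]
    have : 2 * ((b:ℝ) + 1) ≤ ((2^j : ℕ) : ℝ) := by exact_mod_cast h
    push_cast at this ⊢
    linarith

lemma tile_subset_TH {i j a b : ℕ} (ha : a < 2 ^ i) (hb : b < 2 ^ j) (h : 2 ^ j ≤ 2 * b) :
    dyadicTile i j a b ⊆ TH := by
  apply Set.prod_mono
  · exact Set.Icc_subset_Icc (dyadic_nonneg i a) (dyadic_le_one ha)
  · apply Set.Icc_subset_Icc _ (dyadic_le_one hb)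
    rw [div_le_div_iff₀ (by norm_num : (0:ℝ) < 2) (by positivity)]
    have : ((2^j : ℕ) : ℝ) ≤ 2 * (b:ℝ) := by exact_mod_cast h
    push_cast at this ⊢
    linarith

/-- Extraction: inclusion in the left half gives the arithmetic condition. -/
lemma of_tile_subset_LH {i j a b : ℕ} (h : dyadicTile i j a b ⊆ LH) :
    2 * (a + 1) ≤ 2 ^ i := by
  have hm := h (corner_mem_dyadicTile i j a b)
  have h1 : ((a:ℝ) + 1) / 2 ^ i ≤ 1 / 2 := hm.1.2
  rw [div_le_div_iff₀ (by positivity) (by norm_num : (0:ℝ) < 2)] at h1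
  have h2 : 2 * ((a:ℝ) + 1) ≤ ((2^i : ℕ) : ℝ) := by push_cast; linarith
  exact_mod_cast h2

lemma of_tile_subset_RH {i j a b : ℕ} (h : dyadicTile i j a b ⊆ RH) :
    2 ^ i ≤ 2 * a := by
  have hm := h (corner_mem_dyadicTile' i j a b)
  have h1 : (1:ℝ) / 2 ≤ (a:ℝ) / 2 ^ i := hm.1.1
  rw [div_le_div_iff₀ (by norm_num : (0:ℝ) < 2) (by positivity)] at h1
  have h2 : ((2^i : ℕ) : ℝ) ≤ 2 * (a:ℝ) := by push_cast; linarith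
  exact_mod_cast h2

lemma of_tile_subset_BH {i j a b : ℕ} (h : dyadicTile i j a b ⊆ BH) :
    2 * (b + 1) ≤ 2 ^ j := by
  have hm := h (corner_mem_dyadicTile' i j a b)
  have h1 : ((b:ℝ) + 1) / 2 ^ j ≤ 1 / 2 := hm.2.2
  rw [div_le_div_iff₀ (by positivity) (by norm_num : (0:ℝ) < 2)] at h1
  have h2 : 2 * ((b:ℝ) + 1) ≤ ((2^j : ℕ) : ℝ) := by push_cast; linarith
  exact_mod_cast h2

lemma of_tile_subset_TH {i j a b : ℕ} (h : dyadicTile i j a b ⊆ TH) :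
    2 ^ j ≤ 2 * b := by
  have hm := h (corner_mem_dyadicTile i j a b)
  have h1 : (1:ℝ) / 2 ≤ (b:ℝ) / 2 ^ j := hm.2.1
  rw [div_le_div_iff₀ (by norm_num : (0:ℝ) < 2) (by positivity)] at h1
  have h2 : ((2^j : ℕ) : ℝ) ≤ 2 * (b:ℝ) := by push_cast; linarith
  exact_mod_cast h2

/-- Horizontal dichotomy for tiles with `i ≥ 1`. -/
lemma tile_LR_dichotomy {i j a b : ℕ} (hi : 1 ≤ i) (ha : a < 2 ^ i) (hb : b < 2 ^ j) :
    dyadicTile i j a b ⊆ LH ∨ dyadicTile i j a b ⊆ RH := by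
  have h2 : 2 ^ i = 2 * 2 ^ (i - 1) := by
    conv_lhs => rw [show i = (i - 1) + 1 by omega]
    ring
  by_cases hc : a + 1 ≤ 2 ^ (i - 1)
  · exact Or.inl (tile_subset_LH hb (by omega))
  · exact Or.inr (tile_subset_RH ha hb (by omega))

lemma tile_BT_dichotomy {i j a b : ℕ} (hj : 1 ≤ j) (ha : a < 2 ^ i) (hb : b < 2 ^ j) :
    dyadicTile i j a b ⊆ BH ∨ dyadicTile i j a b ⊆ TH := by
  have h2 : 2 ^ j = 2 * 2 ^ (j - 1) := by
    conv_lhs => rw [show j = (j - 1) + 1 by omega]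
    ring
  by_cases hc : b + 1 ≤ 2 ^ (j - 1)
  · exact Or.inl (tile_subset_BH ha (by omega))
  · exact Or.inr (tile_subset_TH ha hb (by omega))

lemma interior_dyadicTile (i j a b : ℕ) :
    interior (dyadicTile i j a b) =
      Set.Ioo ((a:ℝ) / 2 ^ i) (((a:ℝ) + 1) / 2 ^ i) ×ˢ
        Set.Ioo ((b:ℝ) / 2 ^ j) (((b:ℝ) + 1) / 2 ^ j) := by
  unfold dyadicTile
  rw [interior_prod_eq, interior_Icc, interior_Icc]

lemma isClosed_dyadicTile (i j a b : ℕ) : IsClosed (dyadicTile i j a b) :=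
  IsClosed.prod isClosed_Icc isClosed_Icc

end Geometry

section Transport

lemma image_affine2_Icc (A B C D : ℝ) (hA : 0 < A) (hC : 0 < C) (s1 s2 t1 t2 : ℝ) :
    (fun q : ℝ × ℝ => (A * q.1 + B, C * q.2 + D)) '' (Set.Icc s1 s2 ×ˢ Set.Icc t1 t2)
      = Set.Icc (A * s1 + B) (A * s2 + B) ×ˢ Set.Icc (C * t1 + D) (C * t2 + D) := by
  rw [← Set.image_affine_Icc' hA B s1 s2, ← Set.image_affine_Icc' hC D t1 t2]
  rw [Set.prod_image_image_eq]

lemma image_affine2_Ioo (A B C D : ℝ) (hA : 0 < A) (hC : 0 < C) (s1 s2 t1 t2 : ℝ) :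
    (fun q : ℝ × ℝ => (A * q.1 + B, C * q.2 + D)) '' (Set.Ioo s1 s2 ×ˢ Set.Ioo t1 t2)
      = Set.Ioo (A * s1 + B) (A * s2 + B) ×ˢ Set.Ioo (C * t1 + D) (C * t2 + D) := by
  rw [← Set.image_affine_Ioo hA B s1 s2, ← Set.image_affine_Ioo hC D t1 t2]
  rw [Set.prod_image_image_eq]

lemma affine2_injective {A B C D : ℝ} (hA : 0 < A) (hC : 0 < C) :
    Function.Injective (fun q : ℝ × ℝ => (A * q.1 + B, C * q.2 + D)) := by
  intro q q' h
  simp only [Prod.mk.injEq] at h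
  have h1 : q.1 = q'.1 := by
    have := h.1
    nlinarith [h.1]
  have h2 : q.2 = q'.2 := by nlinarith [h.2]
  exact Prod.ext h1 h2

lemma affine2_image_interior_tile {A B C D : ℝ} (hA : 0 < A) (hC : 0 < C) (i j a b : ℕ) :
    (fun q : ℝ × ℝ => (A * q.1 + B, C * q.2 + D)) '' interior (dyadicTile i j a b)
      = interior ((fun q : ℝ × ℝ => (A * q.1 + B, C * q.2 + D)) '' dyadicTile i j a b) := by
  rw [interior_dyadicTile]
  unfold dyadicTile
  rw [image_affine2_Icc A B C D hA hC, image_affine2_Ioo A B C D hA hC,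
    interior_prod_eq, interior_Icc, interior_Icc]

/-- Transport of a tiling of a half `H` of the unit square by order-`(n+1)` tiles to a
tiling of the unit square by order-`n` tiles, along an affine expansion. -/
lemma transport (n : ℕ) (S : Finset (TileIndex (n + 1))) (u : TileIndex n ↪ TileIndex (n + 1))
    (A B C D : ℝ) (hA : 0 < A) (hC : 0 < C)
    (himg : ∀ x : TileIndex n,
      (fun q : ℝ × ℝ => (A * q.1 + B, C * q.2 + D)) '' tileOf (n + 1) (u x) = tileOf n x)
    (H : Set (ℝ × ℝ)) (hH : (fun q : ℝ × ℝ => (A * q.1 + B, C * q.2 + D)) '' H = unitSquare)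
    (F : Set (Set (ℝ × ℝ)))
    (hF : ∀ t ∈ F, ∃ x ∈ S.preimage u u.injective.injOn, t = tileOf (n + 1) (u x))
    (hun : ⋃₀ F = H)
    (hpw : F.Pairwise fun s t => interior s ∩ interior t = ∅) :
    TileableSquare n (S.preimage u u.injective.injOn) := by
  set Φ : ℝ × ℝ → ℝ × ℝ := fun q => (A * q.1 + B, C * q.2 + D) with hΦ
  have hinj : Function.Injective Φ := affine2_injective hA hC
  refine ⟨(Set.image Φ) '' F, ?_, ?_, ?_, ?_⟩
  · rintro t' ⟨t, ht, rfl⟩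
    obtain ⟨x, hx, rfl⟩ := hF t ht
    refine ⟨x, hx, ?_⟩
    rw [← himg x]
  · rintro t' ⟨t, ht, rfl⟩
    obtain ⟨x, hx, rfl⟩ := hF t ht
    rw [himg x]
    exact isDyadicTile_tileOf n x
  · rw [Set.sUnion_image, ← Set.image_iUnion₂]
    rw [show ⋃ t ∈ F, t = ⋃₀ F from (Set.sUnion_eq_biUnion).symm, hun, hH]
  · rintro s' ⟨s, hs, rfl⟩ t' ⟨t, ht, rfl⟩ hne
    have hst : s ≠ t := fun h => hne (by rw [h])
    obtain ⟨xs, hxs, rfl⟩ := hF s hs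
    obtain ⟨xt, hxt, rfl⟩ := hF t ht
    have e1 : interior (Φ '' tileOf (n + 1) (u xs)) = Φ '' interior (tileOf (n + 1) (u xs)) := by
      rw [show tileOf (n + 1) (u xs) = dyadicTile ((u xs).1 : ℕ) ((n+1) - ((u xs).1 : ℕ))
          ((u xs).2.1 : ℕ) ((u xs).2.2 : ℕ) from rfl]
      exact (affine2_image_interior_tile hA hC _ _ _ _).symm
    have e2 : interior (Φ '' tileOf (n + 1) (u xt)) = Φ '' interior (tileOf (n + 1) (u xt)) := by
      rw [show tileOf (n + 1) (u xt) = dyadicTile ((u xt).1 : ℕ) ((n+1) - ((u xt).1 : ℕ))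
          ((u xt).2.1 : ℕ) ((u xt).2.2 : ℕ) from rfl]
      exact (affine2_image_interior_tile hA hC _ _ _ _).symm
    rw [e1, e2, ← Set.image_inter hinj, hpw hs ht hst, Set.image_empty]

end Transport

section Sides

@[simp] lemma upL_val1 (n : ℕ) (x : TileIndex n) : (((upL n) x).1 : ℕ) = (x.1 : ℕ) + 1 := rfl
@[simp] lemma upL_val2 (n : ℕ) (x : TileIndex n) : (((upL n) x).2.1 : ℕ) = (x.2.1 : ℕ) := rfl
@[simp] lemma upL_val3 (n : ℕ) (x : TileIndex n) : (((upL n) x).2.2 : ℕ) = (x.2.2 : ℕ) := rfl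
@[simp] lemma upR_val1 (n : ℕ) (x : TileIndex n) : (((upR n) x).1 : ℕ) = (x.1 : ℕ) + 1 := rfl
@[simp] lemma upR_val2 (n : ℕ) (x : TileIndex n) :
    (((upR n) x).2.1 : ℕ) = (x.2.1 : ℕ) + 2 ^ (x.1 : ℕ) := rfl
@[simp] lemma upR_val3 (n : ℕ) (x : TileIndex n) : (((upR n) x).2.2 : ℕ) = (x.2.2 : ℕ) := rfl
@[simp] lemma upB_val1 (n : ℕ) (x : TileIndex n) : (((upB n) x).1 : ℕ) = (x.1 : ℕ) := rfl
@[simp] lemma upB_val2 (n : ℕ) (x : TileIndex n) : (((upB n) x).2.1 : ℕ) = (x.2.1 : ℕ) := rfl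
@[simp] lemma upB_val3 (n : ℕ) (x : TileIndex n) : (((upB n) x).2.2 : ℕ) = (x.2.2 : ℕ) := rfl
@[simp] lemma upT_val1 (n : ℕ) (x : TileIndex n) : (((upT n) x).1 : ℕ) = (x.1 : ℕ) := rfl
@[simp] lemma upT_val2 (n : ℕ) (x : TileIndex n) : (((upT n) x).2.1 : ℕ) = (x.2.1 : ℕ) := rfl
@[simp] lemma upT_val3 (n : ℕ) (x : TileIndex n) :
    (((upT n) x).2.2 : ℕ) = (x.2.2 : ℕ) + 2 ^ (n - (x.1 : ℕ)) := rfl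

lemma tileOf_eq (m : ℕ) (y : TileIndex m) :
    tileOf m y = dyadicTile (y.1 : ℕ) (m - (y.1 : ℕ)) (y.2.1 : ℕ) (y.2.2 : ℕ) := rfl

lemma tileOf_upL (n : ℕ) (x : TileIndex n) :
    tileOf (n + 1) ((upL n) x)
      = dyadicTile ((x.1 : ℕ) + 1) (n - (x.1 : ℕ)) (x.2.1 : ℕ) (x.2.2 : ℕ) := by
  rw [tileOf_eq]
  simp only [upL_val1, upL_val2, upL_val3]
  have h : n + 1 - ((x.1 : ℕ) + 1) = n - (x.1 : ℕ) := by omega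
  rw [h]

lemma tileOf_upR (n : ℕ) (x : TileIndex n) :
    tileOf (n + 1) ((upR n) x)
      = dyadicTile ((x.1 : ℕ) + 1) (n - (x.1 : ℕ)) ((x.2.1 : ℕ) + 2 ^ (x.1 : ℕ)) (x.2.2 : ℕ) := by
  rw [tileOf_eq]
  simp only [upR_val1, upR_val2, upR_val3]
  have h : n + 1 - ((x.1 : ℕ) + 1) = n - (x.1 : ℕ) := by omega
  rw [h]

lemma tileOf_upB (n : ℕ) (x : TileIndex n) :
    tileOf (n + 1) ((upB n) x)
      = dyadicTile (x.1 : ℕ) (n + 1 - (x.1 : ℕ)) (x.2.1 : ℕ) (x.2.2 : ℕ) := by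
  rw [tileOf_eq]; simp only [upB_val1, upB_val2, upB_val3]

lemma tileOf_upT (n : ℕ) (x : TileIndex n) :
    tileOf (n + 1) ((upT n) x)
      = dyadicTile (x.1 : ℕ) (n + 1 - (x.1 : ℕ)) (x.2.1 : ℕ)
          ((x.2.2 : ℕ) + 2 ^ (n - (x.1 : ℕ))) := by
  rw [tileOf_eq]; simp only [upT_val1, upT_val2, upT_val3]

lemma himgL (n : ℕ) (x : TileIndex n) :
    (fun q : ℝ × ℝ => ((2:ℝ) * q.1 + 0, (1:ℝ) * q.2 + 0)) '' tileOf (n + 1) ((upL n) x)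
      = tileOf n x := by
  rw [tileOf_upL, tileOf_eq]
  unfold dyadicTile
  rw [image_affine2_Icc 2 0 1 0 (by norm_num) (by norm_num)]
  have h2 : ((2:ℝ) ^ ((x.1 : ℕ))) ≠ 0 := by positivity
  congr 1 <;> congr 1 <;> (try rw [pow_succ]) <;> field_simp <;> ring

lemma himgR (n : ℕ) (x : TileIndex n) :
    (fun q : ℝ × ℝ => ((2:ℝ) * q.1 + (-1), (1:ℝ) * q.2 + 0)) '' tileOf (n + 1) ((upR n) x)
      = tileOf n x := by
  rw [tileOf_upR, tileOf_eq]
  unfold dyadicTile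
  rw [image_affine2_Icc 2 (-1) 1 0 (by norm_num) (by norm_num)]
  have h2 : ((2:ℝ) ^ ((x.1 : ℕ))) ≠ 0 := by positivity
  congr 1 <;> congr 1 <;> (try rw [pow_succ]) <;> push_cast <;> field_simp <;> ring

lemma himgB (n : ℕ) (x : TileIndex n) :
    (fun q : ℝ × ℝ => ((1:ℝ) * q.1 + 0, (2:ℝ) * q.2 + 0)) '' tileOf (n + 1) ((upB n) x)
      = tileOf n x := by
  rw [tileOf_upB, tileOf_eq]
  unfold dyadicTile
  rw [image_affine2_Icc 1 0 2 0 (by norm_num) (by norm_num)]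
  have hle : (x.1 : ℕ) ≤ n := by have := x.1.isLt; omega
  have h : n + 1 - (x.1 : ℕ) = (n - (x.1 : ℕ)) + 1 := by omega
  rw [h]
  have h2 : ((2:ℝ) ^ ((n - (x.1 : ℕ)))) ≠ 0 := by positivity
  congr 1 <;> congr 1 <;> (try rw [pow_succ]) <;> field_simp <;> ring

lemma himgT (n : ℕ) (x : TileIndex n) :
    (fun q : ℝ × ℝ => ((1:ℝ) * q.1 + 0, (2:ℝ) * q.2 + (-1))) '' tileOf (n + 1) ((upT n) x)
      = tileOf n x := by
  rw [tileOf_upT, tileOf_eq]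
  unfold dyadicTile
  rw [image_affine2_Icc 1 0 2 (-1) (by norm_num) (by norm_num)]
  have hle : (x.1 : ℕ) ≤ n := by have := x.1.isLt; omega
  have h : n + 1 - (x.1 : ℕ) = (n - (x.1 : ℕ)) + 1 := by omega
  rw [h]
  have h2 : ((2:ℝ) ^ ((n - (x.1 : ℕ)))) ≠ 0 := by positivity
  congr 1 <;> congr 1 <;> (try rw [pow_succ]) <;> push_cast <;> field_simp <;> ring

lemma hHL : (fun q : ℝ × ℝ => ((2:ℝ) * q.1 + 0, (1:ℝ) * q.2 + 0)) '' LH = unitSquare := by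
  unfold LH unitSquare
  rw [image_affine2_Icc 2 0 1 0 (by norm_num) (by norm_num)]
  norm_num

lemma hHR : (fun q : ℝ × ℝ => ((2:ℝ) * q.1 + (-1), (1:ℝ) * q.2 + 0)) '' RH = unitSquare := by
  unfold RH unitSquare
  rw [image_affine2_Icc 2 (-1) 1 0 (by norm_num) (by norm_num)]
  norm_num

lemma hHB : (fun q : ℝ × ℝ => ((1:ℝ) * q.1 + 0, (2:ℝ) * q.2 + 0)) '' BH = unitSquare := by
  unfold BH unitSquare
  rw [image_affine2_Icc 1 0 2 0 (by norm_num) (by norm_num)]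
  norm_num

lemma hHT : (fun q : ℝ × ℝ => ((1:ℝ) * q.1 + 0, (2:ℝ) * q.2 + (-1))) '' TH = unitSquare := by
  unfold TH unitSquare
  rw [image_affine2_Icc 1 0 2 (-1) (by norm_num) (by norm_num)]
  norm_num

lemma exists_upL {n : ℕ} {y : TileIndex (n + 1)} (h : tileOf (n + 1) y ⊆ LH) :
    ∃ x : TileIndex n, (upL n) x = y := by
  have hnat : 2 * ((y.2.1 : ℕ) + 1) ≤ 2 ^ (y.1 : ℕ) := of_tile_subset_LH h
  have hi : 1 ≤ (y.1 : ℕ) := by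
    rcases Nat.eq_zero_or_pos (y.1 : ℕ) with h0 | h0
    · have h1 : 2 ^ (y.1 : ℕ) = 1 := by rw [h0]; rfl
      omega
    · exact h0
  have hp : 2 ^ (y.1 : ℕ) = 2 * 2 ^ ((y.1 : ℕ) - 1) := by
    conv_lhs => rw [show (y.1 : ℕ) = ((y.1 : ℕ) - 1) + 1 by omega]
    ring
  have hb := y.2.2.isLt
  refine ⟨mkTI n ((y.1 : ℕ) - 1) (y.2.1 : ℕ) (y.2.2 : ℕ)
    (by have := y.1.isLt; omega) (by omega)
    (by rw [show n - ((y.1 : ℕ) - 1) = n + 1 - (y.1 : ℕ) by omega]; exact hb), ?_⟩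
  refine tileIndex_ext ?_ ?_ ?_ <;> simp [upL_val1, upL_val2, upL_val3, mkTI_fst] <;> omega

lemma exists_upR {n : ℕ} {y : TileIndex (n + 1)} (h : tileOf (n + 1) y ⊆ RH) :
    ∃ x : TileIndex n, (upR n) x = y := by
  have hnat : 2 ^ (y.1 : ℕ) ≤ 2 * (y.2.1 : ℕ) := of_tile_subset_RH h
  have ha := y.2.1.isLt
  have hi : 1 ≤ (y.1 : ℕ) := by
    rcases Nat.eq_zero_or_pos (y.1 : ℕ) with h0 | h0
    · have h1 : 2 ^ (y.1 : ℕ) = 1 := by rw [h0]; rfl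
      omega
    · exact h0
  have hp : 2 ^ (y.1 : ℕ) = 2 * 2 ^ ((y.1 : ℕ) - 1) := by
    conv_lhs => rw [show (y.1 : ℕ) = ((y.1 : ℕ) - 1) + 1 by omega]
    ring
  have hb := y.2.2.isLt
  refine ⟨mkTI n ((y.1 : ℕ) - 1) ((y.2.1 : ℕ) - 2 ^ ((y.1 : ℕ) - 1)) (y.2.2 : ℕ)
    (by have := y.1.isLt; omega) (by omega)
    (by rw [show n - ((y.1 : ℕ) - 1) = n + 1 - (y.1 : ℕ) by omega]; exact hb), ?_⟩
  refine tileIndex_ext ?_ ?_ ?_ <;>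
    simp [upR_val1, upR_val2, upR_val3, mkTI_fst, mkTI_snd1, mkTI_snd2] <;> omega

lemma exists_upB {n : ℕ} {y : TileIndex (n + 1)} (h : tileOf (n + 1) y ⊆ BH) :
    ∃ x : TileIndex n, (upB n) x = y := by
  have hnat : 2 * ((y.2.2 : ℕ) + 1) ≤ 2 ^ (n + 1 - (y.1 : ℕ)) := of_tile_subset_BH h
  have hi : (y.1 : ℕ) ≤ n := by
    by_contra hc
    have h0 : n + 1 - (y.1 : ℕ) = 0 := by omega
    have h1 : 2 ^ (n + 1 - (y.1 : ℕ)) = 1 := by rw [h0]; rfl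
    omega
  have hp : 2 ^ (n + 1 - (y.1 : ℕ)) = 2 * 2 ^ (n - (y.1 : ℕ)) := by
    conv_lhs => rw [show n + 1 - (y.1 : ℕ) = (n - (y.1 : ℕ)) + 1 by omega]
    ring
  refine ⟨mkTI n (y.1 : ℕ) (y.2.1 : ℕ) (y.2.2 : ℕ)
    (by omega) y.2.1.isLt (by omega), ?_⟩
  refine tileIndex_ext ?_ ?_ ?_ <;>
    simp [upB_val1, upB_val2, upB_val3, mkTI_fst, mkTI_snd1, mkTI_snd2]

lemma exists_upT {n : ℕ} {y : TileIndex (n + 1)} (h : tileOf (n + 1) y ⊆ TH) :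
    ∃ x : TileIndex n, (upT n) x = y := by
  have hnat : 2 ^ (n + 1 - (y.1 : ℕ)) ≤ 2 * (y.2.2 : ℕ) := of_tile_subset_TH h
  have hb := y.2.2.isLt
  have hi : (y.1 : ℕ) ≤ n := by
    by_contra hc
    have h0 : n + 1 - (y.1 : ℕ) = 0 := by omega
    have h1 : 2 ^ (n + 1 - (y.1 : ℕ)) = 1 := by rw [h0]; rfl
    omega
  have hp : 2 ^ (n + 1 - (y.1 : ℕ)) = 2 * 2 ^ (n - (y.1 : ℕ)) := by
    conv_lhs => rw [show n + 1 - (y.1 : ℕ) = (n - (y.1 : ℕ)) + 1 by omega]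
    ring
  refine ⟨mkTI n (y.1 : ℕ) (y.2.1 : ℕ) ((y.2.2 : ℕ) - 2 ^ (n - (y.1 : ℕ)))
    (by omega) y.2.1.isLt (by omega), ?_⟩
  refine tileIndex_ext ?_ ?_ ?_ <;>
    simp [upT_val1, upT_val2, upT_val3, mkTI_fst, mkTI_snd1, mkTI_snd2] <;> omega

end Sides

section Splitting

lemma sUnion_filter_half {F : Set (Set (ℝ × ℝ))} (hfin : F.Finite)
    (hcl : ∀ t ∈ F, IsClosed t) (hun : ⋃₀ F = unitSquare) {H K O : Set (ℝ × ℝ)}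
    (hsplit : ∀ t ∈ F, t ⊆ H ∨ t ⊆ K) (hOU : O ⊆ unitSquare) (hOK : ∀ z ∈ O, z ∉ K)
    (hHO : H ⊆ closure O) : ⋃₀ {t ∈ F | t ⊆ H} = H := by
  apply Set.Subset.antisymm
  · rintro z ⟨t, ⟨ht, htH⟩, hz⟩
    exact htH hz
  · have hsub : O ⊆ ⋃₀ {t ∈ F | t ⊆ H} := by
      intro z hz
      have hz2 : z ∈ ⋃₀ F := by rw [hun]; exact hOU hz
      obtain ⟨t, ht, hzt⟩ := hz2
      rcases hsplit t ht with hH' | hK'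
      · exact ⟨t, ⟨ht, hH'⟩, hzt⟩
      · exact absurd (hK' hzt) (hOK z hz)
    have hclosed : IsClosed (⋃₀ {t ∈ F | t ⊆ H}) := by
      rw [Set.sUnion_eq_biUnion]
      exact Set.Finite.isClosed_biUnion (hfin.subset (Set.sep_subset _ _))
        (fun t ht => hcl t ht.1)
    intro z hz
    have := closure_mono hsub (hHO hz)
    rwa [hclosed.closure_eq] at this

lemma LH_closure : LH ⊆ closure (Set.Ico (0:ℝ) (1/2) ×ˢ Set.Icc (0:ℝ) 1) := by
  rw [closure_prod_eq, closure_Ico (by norm_num : (0:ℝ) ≠ 1/2), closure_Icc]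
  exact subset_refl _

lemma RH_closure : RH ⊆ closure (Set.Ioc (1/2:ℝ) 1 ×ˢ Set.Icc (0:ℝ) 1) := by
  rw [closure_prod_eq, closure_Ioc (by norm_num : (1/2:ℝ) ≠ 1), closure_Icc]
  exact subset_refl _

lemma BH_closure : BH ⊆ closure (Set.Icc (0:ℝ) 1 ×ˢ Set.Ico (0:ℝ) (1/2)) := by
  rw [closure_prod_eq, closure_Ico (by norm_num : (0:ℝ) ≠ 1/2), closure_Icc]
  exact subset_refl _

lemma TH_closure : TH ⊆ closure (Set.Icc (0:ℝ) 1 ×ˢ Set.Ioc (1/2:ℝ) 1) := by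
  rw [closure_prod_eq, closure_Ioc (by norm_num : (1/2:ℝ) ≠ 1), closure_Icc]
  exact subset_refl _

/-- The master splitting lemma: a tileable square of order `n+1` splits. -/
lemma splitting (n : ℕ) (S : Finset (TileIndex (n + 1))) (h : TileableSquare (n + 1) S) :
    (TileableSquare n (S.preimage (upL n) (upL n).injective.injOn) ∧
      TileableSquare n (S.preimage (upR n) (upR n).injective.injOn)) ∨
    (TileableSquare n (S.preimage (upB n) (upB n).injective.injOn) ∧
      TileableSquare n (S.preimage (upT n) (upT n).injective.injOn)) := by
  obtain ⟨F, hFS, hdy, hun, hpw⟩ := h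
  have hfin : F.Finite := by
    apply Set.Finite.subset ((S.finite_toSet).image (tileOf (n + 1)))
    intro t ht
    obtain ⟨x, hx, rfl⟩ := hFS t ht
    exact ⟨x, hx, rfl⟩
  have hcl : ∀ t ∈ F, IsClosed t := by
    intro t ht
    obtain ⟨x, hx, rfl⟩ := hFS t ht
    rw [tileOf_eq]
    exact isClosed_dyadicTile _ _ _ _
  have hclaim : (∀ t ∈ F, t ⊆ LH ∨ t ⊆ RH) ∨ (∀ t ∈ F, t ⊆ BH ∨ t ⊆ TH) := by
    by_contra hcon
    push_neg at hcon
    obtain ⟨⟨t1, ht1, ht1c⟩, ⟨t2, ht2, ht2c⟩⟩ := hcon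
    obtain ⟨x1, hx1, rfl⟩ := hFS t1 ht1
    obtain ⟨x2, hx2, rfl⟩ := hFS t2 ht2
    rw [tileOf_eq] at ht1c ht2c
    have hi1 : (x1.1 : ℕ) = 0 := by
      by_contra hi
      rcases tile_LR_dichotomy (show 1 ≤ (x1.1 : ℕ) by omega) x1.2.1.isLt x1.2.2.isLt
        with hc | hc
      · exact ht1c.1 hc
      · exact ht1c.2 hc
    have hj2 : n + 1 - (x2.1 : ℕ) = 0 := by
      by_contra hj
      rcases tile_BT_dichotomy (show 1 ≤ n + 1 - (x2.1 : ℕ) by omega) x2.2.1.isLt x2.2.2.isLt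
        with hc | hc
      · exact ht2c.1 hc
      · exact ht2c.2 hc
    have ha1 : (x1.2.1 : ℕ) = 0 := by
      have h1 := x1.2.1.isLt
      have h2 : 2 ^ (x1.1 : ℕ) = 1 := by rw [hi1]; rfl
      omega
    have hb2 : (x2.2.2 : ℕ) = 0 := by
      have h1 := x2.2.2.isLt
      have h2 : 2 ^ (n + 1 - (x2.1 : ℕ)) = 1 := by rw [hj2]; rfl
      omega
    -- real endpoints
    set i2 : ℕ := (x2.1 : ℕ) with hi2
    have hi2pos : 1 ≤ i2 := by have := x2.1.isLt; omega
    have hj1 : n + 1 - (x1.1 : ℕ) = n + 1 := by omega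
    -- endpoints of t1
    have hA1lo : ((x1.2.1 : ℕ) : ℝ) / 2 ^ (x1.1 : ℕ) = 0 := by rw [ha1, hi1]; norm_num
    have hA1hi : (((x1.2.1 : ℕ) : ℝ) + 1) / 2 ^ (x1.1 : ℕ) = 1 := by rw [ha1, hi1]; norm_num
    have hB2lo : ((x2.2.2 : ℕ) : ℝ) / 2 ^ (n + 1 - (x2.1 : ℕ)) = 0 := by
      rw [hb2, hj2]; norm_num
    have hB2hi : (((x2.2.2 : ℕ) : ℝ) + 1) / 2 ^ (n + 1 - (x2.1 : ℕ)) = 1 := by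
      rw [hb2, hj2]; norm_num
    set A2lo : ℝ := ((x2.2.1 : ℕ) : ℝ) / 2 ^ i2 with hA2lo
    set A2hi : ℝ := (((x2.2.1 : ℕ) : ℝ) + 1) / 2 ^ i2 with hA2hi
    set B1lo : ℝ := ((x1.2.2 : ℕ) : ℝ) / 2 ^ (n + 1 - (x1.1 : ℕ)) with hB1lo
    set B1hi : ℝ := (((x1.2.2 : ℕ) : ℝ) + 1) / 2 ^ (n + 1 - (x1.1 : ℕ)) with hB1hi
    have hA2 : 0 ≤ A2lo ∧ A2lo < A2hi ∧ A2hi ≤ 1 := by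
      refine ⟨dyadic_nonneg _ _, ?_, dyadic_le_one x2.2.1.isLt⟩
      rw [hA2lo, hA2hi]
      exact (div_lt_div_iff_of_pos_right (by positivity)).2 (by linarith)
    have hB1 : 0 ≤ B1lo ∧ B1lo < B1hi ∧ B1hi ≤ 1 := by
      refine ⟨dyadic_nonneg _ _, ?_, dyadic_le_one x1.2.2.isLt⟩
      rw [hB1lo, hB1hi]
      exact (div_lt_div_iff_of_pos_right (by positivity)).2 (by linarith)
    have hne : tileOf (n + 1) x1 ≠ tileOf (n + 1) x2 := by
      intro heq
      have hmem0 : ((0 : ℝ), B1lo) ∈ tileOf (n + 1) x1 := by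
        rw [tileOf_eq]
        exact ⟨⟨by rw [hA1lo], by rw [hA1hi]; norm_num⟩, ⟨le_refl _, le_of_lt hB1.2.1⟩⟩
      have hmem1 : ((1 : ℝ), B1lo) ∈ tileOf (n + 1) x1 := by
        rw [tileOf_eq]
        exact ⟨⟨by rw [hA1lo]; norm_num, by rw [hA1hi]⟩, ⟨le_refl _, le_of_lt hB1.2.1⟩⟩
      rw [heq, tileOf_eq] at hmem0 hmem1
      have h0 : A2lo ≤ 0 := hmem0.1.1
      have h1 : (1 : ℝ) ≤ A2hi := hmem1.1.2
      -- A2hi ≤ A2lo + 1/2^i2 ≤ 0 + 1/2 < 1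
      have hpow : (2:ℝ) ^ (1:ℕ) ≤ 2 ^ i2 := by
        apply pow_le_pow_right₀ (by norm_num : (1:ℝ) ≤ 2) hi2pos
      rw [hA2hi] at h1
      rw [hA2lo] at h0
      have hp : (0:ℝ) < 2 ^ i2 := by positivity
      have hc0 : ((x2.2.1 : ℕ) : ℝ) ≤ 0 := by
        have h3 := mul_le_mul_of_nonneg_right h0 (le_of_lt hp)
        rwa [div_mul_cancel₀ _ (ne_of_gt hp), zero_mul] at h3
      have hc1 : (2:ℝ) ^ i2 ≤ ((x2.2.1 : ℕ) : ℝ) + 1 := by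
        rw [le_div_iff₀ hp] at h1; linarith
      have hc2 : (0:ℝ) ≤ ((x2.2.1 : ℕ) : ℝ) := Nat.cast_nonneg _
      norm_num at hpow
      linarith
    have hdisj := hpw ht1 ht2 hne
    set mx : ℝ := (A2lo + A2hi) / 2 with hmx
    set my : ℝ := (B1lo + B1hi) / 2 with hmy
    have hmem1 : (mx, my) ∈ interior (tileOf (n + 1) x1) := by
      rw [tileOf_eq, interior_dyadicTile]
      constructor
      · rw [hA1lo, hA1hi]
        constructor
        · simp only [hmx]; nlinarith [hA2.1, hA2.2.1]
        · simp only [hmx]; nlinarith [hA2.2.1, hA2.2.2]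
      · exact ⟨by simp only [hmy]; linarith [hB1.2.1], by simp only [hmy]; linarith [hB1.2.1]⟩
    have hmem2 : (mx, my) ∈ interior (tileOf (n + 1) x2) := by
      rw [tileOf_eq, interior_dyadicTile]
      constructor
      · exact ⟨by simp only [hmx]; linarith [hA2.2.1], by simp only [hmx]; linarith [hA2.2.1]⟩
      · rw [hB2lo, hB2hi]
        constructor
        · simp only [hmy]; nlinarith [hB1.1, hB1.2.1]
        · simp only [hmy]; nlinarith [hB1.2.1, hB1.2.2]
    exact Set.eq_empty_iff_forall_notMem.1 hdisj (mx, my) ⟨hmem1, hmem2⟩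
  rcases hclaim with hsp | hsp
  · left
    constructor
    · -- left half
      refine transport n S (upL n) 2 0 1 0 (by norm_num) (by norm_num) (himgL n) LH hHL
        {t ∈ F | t ⊆ LH} ?_ ?_ (hpw.mono (Set.sep_subset _ _))
      · rintro t ⟨ht, htL⟩
        obtain ⟨y, hy, rfl⟩ := hFS t ht
        obtain ⟨x, rfl⟩ := exists_upL htL
        exact ⟨x, Finset.mem_preimage.2 hy, rfl⟩
      · refine sUnion_filter_half hfin hcl hun hsp ?_ ?_ LH_closure
        · exact Set.prod_mono (Set.Ico_subset_Icc_self.trans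
            (Set.Icc_subset_Icc (le_refl _) (by norm_num))) (subset_refl _)
        · rintro z ⟨hz1, _⟩ hzK
          exact absurd hzK.1.1 (not_le.2 hz1.2)
    · -- right half
      refine transport n S (upR n) 2 (-1) 1 0 (by norm_num) (by norm_num) (himgR n) RH hHR
        {t ∈ F | t ⊆ RH} ?_ ?_ (hpw.mono (Set.sep_subset _ _))
      · rintro t ⟨ht, htR⟩
        obtain ⟨y, hy, rfl⟩ := hFS t ht
        obtain ⟨x, rfl⟩ := exists_upR htR
        exact ⟨x, Finset.mem_preimage.2 hy, rfl⟩
      · refine sUnion_filter_half hfin hcl hun (fun t ht => (hsp t ht).symm) ?_ ?_ RH_closure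
        · exact Set.prod_mono (Set.Ioc_subset_Icc_self.trans
            (Set.Icc_subset_Icc (by norm_num) (le_refl _))) (subset_refl _)
        · rintro z ⟨hz1, _⟩ hzK
          exact absurd hzK.1.2 (not_le.2 hz1.1)
  · right
    constructor
    · -- bottom half
      refine transport n S (upB n) 1 0 2 0 (by norm_num) (by norm_num) (himgB n) BH hHB
        {t ∈ F | t ⊆ BH} ?_ ?_ (hpw.mono (Set.sep_subset _ _))
      · rintro t ⟨ht, htB⟩
        obtain ⟨y, hy, rfl⟩ := hFS t ht
        obtain ⟨x, rfl⟩ := exists_upB htB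
        exact ⟨x, Finset.mem_preimage.2 hy, rfl⟩
      · refine sUnion_filter_half hfin hcl hun hsp ?_ ?_ BH_closure
        · exact Set.prod_mono (subset_refl _) (Set.Ico_subset_Icc_self.trans
            (Set.Icc_subset_Icc (le_refl _) (by norm_num)))
        · rintro z ⟨_, hz2⟩ hzK
          exact absurd hzK.2.1 (not_le.2 hz2.2)
    · -- top half
      refine transport n S (upT n) 1 0 2 (-1) (by norm_num) (by norm_num) (himgT n) TH hHT
        {t ∈ F | t ⊆ TH} ?_ ?_ (hpw.mono (Set.sep_subset _ _))
      · rintro t ⟨ht, htT⟩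
        obtain ⟨y, hy, rfl⟩ := hFS t ht
        obtain ⟨x, rfl⟩ := exists_upT htT
        exact ⟨x, Finset.mem_preimage.2 hy, rfl⟩
      · refine sUnion_filter_half hfin hcl hun (fun t ht => (hsp t ht).symm) ?_ ?_ TH_closure
        · exact Set.prod_mono (subset_refl _) (Set.Ioc_subset_Icc_self.trans
            (Set.Icc_subset_Icc (by norm_num) (le_refl _)))
        · rintro z ⟨_, hz2⟩ hzK
          exact absurd hzK.2.2 (not_le.2 hz2.1)

end Splitting

section Probability

open DyadicMu

open Classical in
lemma T_eq_mu (n : ℕ) (p : ℝ) :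
    T n p = mu p Finset.univ (fun S => if TileableSquare n S then (1:ℝ) else 0) :=
  Pr_eq_mu n p (TileableSquare n)

open Classical in
lemma T_nonneg (n : ℕ) (p : ℝ) (hp0 : 0 ≤ p) (hp1 : p ≤ 1) : 0 ≤ T n p := by
  rw [T_eq_mu]
  have h := mu_mono hp0 hp1 (Finset.univ : Finset (TileIndex n))
    (f := fun _ => (0:ℝ)) (g := fun S => if TileableSquare n S then (1:ℝ) else 0)
    (fun S => by by_cases h : TileableSquare n S <;> simp [h])
  rwa [mu_const] at h

open Classical in
lemma T_le_one (n : ℕ) (p : ℝ) (hp0 : 0 ≤ p) (hp1 : p ≤ 1) : T n p ≤ 1 := by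
  rw [T_eq_mu]
  have h := mu_mono hp0 hp1 (Finset.univ : Finset (TileIndex n))
    (f := fun S => if TileableSquare n S then (1:ℝ) else 0) (g := fun _ => (1:ℝ))
    (fun S => by by_cases h : TileableSquare n S <;> simp [h])
  rwa [mu_const] at h

lemma preimage_inter_map {α β : Type*} [DecidableEq α] [DecidableEq β] [Fintype β]
    (u : β ↪ α) (S : Finset α) :
    (S ∩ Finset.univ.map u).preimage u u.injective.injOn = S.preimage u u.injective.injOn := by
  ext x
  simp only [Finset.mem_preimage, Finset.mem_inter, Finset.mem_map]
  exact ⟨fun h => h.1, fun h => ⟨h, ⟨x, Finset.mem_univ x, rfl⟩⟩⟩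

open Classical in
/-- The half-event indicator. -/
noncomputable def indHalf (n : ℕ) (u : TileIndex n ↪ TileIndex (n + 1))
    (S : Finset (TileIndex (n + 1))) : ℝ :=
  if TileableSquare n (S.preimage u u.injective.injOn) then (1:ℝ) else 0

lemma indHalf_nonneg (n : ℕ) (u : TileIndex n ↪ TileIndex (n + 1)) (S) :
    0 ≤ indHalf n u S := by
  unfold indHalf; split <;> norm_num

lemma indHalf_le_one (n : ℕ) (u : TileIndex n ↪ TileIndex (n + 1)) (S) :
    indHalf n u S ≤ 1 := by
  unfold indHalf; split <;> norm_num

lemma tileable_mono {n : ℕ} {S S' : Finset (TileIndex n)} (h : S ⊆ S')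
    (ht : TileableSquare n S) : TileableSquare n S' := by
  obtain ⟨F, hF, hrest⟩ := ht
  exact ⟨F, fun t htF => by obtain ⟨x, hx, rfl⟩ := hF t htF; exact ⟨x, h hx, rfl⟩, hrest⟩

lemma indHalf_monotone (n : ℕ) (u : TileIndex n ↪ TileIndex (n + 1)) :
    Monotone (indHalf n u) := by
  intro S S' hSS
  unfold indHalf
  by_cases h : TileableSquare n (S.preimage u u.injective.injOn)
  · rw [if_pos h, if_pos (tileable_mono (Finset.monotone_preimage u.injective hSS) h)]
  · rw [if_neg h]
    split <;> norm_num

lemma indHalf_dependsOn (n : ℕ) (u : TileIndex n ↪ TileIndex (n + 1)) :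
    DependsOn (indHalf n u) (Finset.univ.map u) := by
  intro S
  unfold indHalf
  rw [preimage_inter_map]

open Classical in
lemma mu_indHalf (n : ℕ) (p : ℝ) (u : TileIndex n ↪ TileIndex (n + 1)) :
    mu p Finset.univ (indHalf n u) = T n p := by
  have h1 := mu_dependsOn (p := p) (v := Finset.univ.map u)
    (Finset.univ : Finset (TileIndex (n + 1))) (indHalf n u) (indHalf_dependsOn n u)
  rw [Finset.univ_inter] at h1
  rw [h1]
  have h2 := mu_map (p := p) u Finset.univ
    (fun S : Finset (TileIndex n) => if TileableSquare n S then (1:ℝ) else 0)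
  rw [← T_eq_mu] at h2
  rw [← h2]
  rfl

lemma disjoint_LR (n : ℕ) :
    Disjoint (Finset.univ.map (upL n)) (Finset.univ.map (upR n)) := by
  rw [Finset.disjoint_left]
  rintro y hyL hyR
  obtain ⟨x, _, rfl⟩ := Finset.mem_map.1 hyL
  obtain ⟨x', _, he⟩ := Finset.mem_map.1 hyR
  have e1 := congrArg (fun z : TileIndex (n + 1) => (z.1 : ℕ)) he
  have e2 := congrArg (fun z : TileIndex (n + 1) => (z.2.1 : ℕ)) he
  simp only [upL_val1, upL_val2, upR_val1, upR_val2] at e1 e2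
  have h1 := x.2.1.isLt
  have hpeq : (2:ℕ) ^ (x'.1 : ℕ) = 2 ^ (x.1 : ℕ) := by rw [show (x'.1 : ℕ) = (x.1:ℕ) by omega]
  omega

lemma disjoint_BT (n : ℕ) :
    Disjoint (Finset.univ.map (upB n)) (Finset.univ.map (upT n)) := by
  rw [Finset.disjoint_left]
  rintro y hyB hyT
  obtain ⟨x, _, rfl⟩ := Finset.mem_map.1 hyB
  obtain ⟨x', _, he⟩ := Finset.mem_map.1 hyT
  have e1 := congrArg (fun z : TileIndex (n + 1) => (z.1 : ℕ)) he
  have e3 := congrArg (fun z : TileIndex (n + 1) => (z.2.2 : ℕ)) he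
  simp only [upB_val1, upB_val3, upT_val1, upT_val3] at e1 e3
  have h1 := x.2.2.isLt
  have hpeq : (2:ℕ) ^ (n - (x'.1 : ℕ)) = 2 ^ (n - (x.1 : ℕ)) := by
    rw [show (x'.1 : ℕ) = (x.1:ℕ) from e1]
  omega

open Classical in
/-- The key recursive inequality. -/
lemma T_succ_le (n : ℕ) (p : ℝ) (hp0 : 0 ≤ p) (hp1 : p ≤ 1) :
    T (n + 1) p ≤ 2 * (T n p) ^ 2 - (T n p) ^ 4 := by
  set fL := indHalf n (upL n)
  set fR := indHalf n (upR n)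
  set fB := indHalf n (upB n)
  set fT := indHalf n (upT n)
  have hpoint : ∀ S : Finset (TileIndex (n + 1)),
      (if TileableSquare (n + 1) S then (1:ℝ) else 0)
        ≤ fL S * fR S + fB S * fT S - (fL S * fR S) * (fB S * fT S) := by
    intro S
    have h0L := indHalf_nonneg n (upL n) S
    have h0R := indHalf_nonneg n (upR n) S
    have h0B := indHalf_nonneg n (upB n) S
    have h0T := indHalf_nonneg n (upT n) S
    have h1L := indHalf_le_one n (upL n) S
    have h1R := indHalf_le_one n (upR n) S
    have h1B := indHalf_le_one n (upB n) S
    have h1T := indHalf_le_one n (upT n) S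
    by_cases hT : TileableSquare (n + 1) S
    · rw [if_pos hT]
      rcases splitting n S hT with ⟨h1, h2⟩ | ⟨h1, h2⟩
      · have e1 : fL S = 1 := by simp only [fL, indHalf, if_pos h1]
        have e2 : fR S = 1 := by simp only [fR, indHalf, if_pos h2]
        rw [e1, e2]
        nlinarith
      · have e1 : fB S = 1 := by simp only [fB, indHalf, if_pos h1]
        have e2 : fT S = 1 := by simp only [fT, indHalf, if_pos h2]
        rw [e1, e2]
        nlinarith
    · rw [if_neg hT]
      have ha0 : 0 ≤ fL S * fR S := mul_nonneg h0L h0R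
      have hb0 : 0 ≤ fB S * fT S := mul_nonneg h0B h0T
      have hb1 : fB S * fT S ≤ 1 := mul_le_one₀ h1B h0T h1T
      nlinarith [mul_le_of_le_one_right ha0 hb1]
  have hmono : ∀ u : TileIndex n ↪ TileIndex (n + 1), ∀ u' : TileIndex n ↪ TileIndex (n + 1),
      Monotone (fun S => indHalf n u S * indHalf n u' S) := by
    intro u u' S S' hSS
    exact mul_le_mul (indHalf_monotone n u hSS) (indHalf_monotone n u' hSS)
      (indHalf_nonneg n u' S) (indHalf_nonneg n u S')
  have step1 : T (n + 1) p ≤ mu p Finset.univ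
      (fun S => fL S * fR S + fB S * fT S - (fL S * fR S) * (fB S * fT S)) := by
    rw [T_eq_mu]
    exact mu_mono hp0 hp1 _ hpoint
  have hdepL : DependsOn fL (Finset.univ.map (upL n)) := indHalf_dependsOn n (upL n)
  have hdepR : DependsOn fR (Finset.univ.map (upR n)) := indHalf_dependsOn n (upR n)
  have hdepB : DependsOn fB (Finset.univ.map (upB n)) := indHalf_dependsOn n (upB n)
  have hdepT : DependsOn fT (Finset.univ.map (upT n)) := indHalf_dependsOn n (upT n)
  have hLR : mu p Finset.univ (fun S => fL S * fR S) = T n p * T n p := by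
    rw [mu_mul_of_disjoint (disjoint_LR n) Finset.univ fL fR hdepL hdepR,
      mu_indHalf, mu_indHalf]
  have hBT : mu p Finset.univ (fun S => fB S * fT S) = T n p * T n p := by
    rw [mu_mul_of_disjoint (disjoint_BT n) Finset.univ fB fT hdepB hdepT,
      mu_indHalf, mu_indHalf]
  have hHarris : T n p * T n p * (T n p * T n p) ≤
      mu p Finset.univ (fun S => (fL S * fR S) * (fB S * fT S)) := by
    have h := mu_harris hp0 hp1 Finset.univ (fun S => fL S * fR S) (fun S => fB S * fT S)
      (hmono (upL n) (upR n)) (hmono (upB n) (upT n))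
    rwa [hLR, hBT] at h
  have step2 : mu p Finset.univ
      (fun S => fL S * fR S + fB S * fT S - (fL S * fR S) * (fB S * fT S))
      = mu p Finset.univ (fun S => fL S * fR S) + mu p Finset.univ (fun S => fB S * fT S)
        - mu p Finset.univ (fun S => (fL S * fR S) * (fB S * fT S)) := by
    rw [mu_sub, mu_add]
  rw [step2, hLR, hBT] at step1
  nlinarith [step1, hHarris]

end Probability


/-- if `T_n(p) < (√5 - 1)/2` for some `n`, then `T_n(p) → 0`. -/
theorem tendsto_zero_of_lt_golden (p : ℝ) (hp : p ∈ Set.Icc (0 : ℝ) 1)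
    (h : ∃ n : ℕ, T n p < (Real.sqrt 5 - 1) / 2) :
    Tendsto (fun n => T n p) atTop (𝓝 0) := by
  obtain ⟨hp0, hp1⟩ := hp
  obtain ⟨m, hm⟩ := h
  set s : ℝ := Real.sqrt 5 with hs
  have hs2 : s ^ 2 = 5 := Real.sq_sqrt (by norm_num)
  have hs0 : 0 ≤ s := Real.sqrt_nonneg 5
  have hs1 : 1 < s := by nlinarith
  have hs3 : s < 3 := by nlinarith
  set φ : ℝ := (s - 1) / 2 with hφ
  have hφ1 : φ < 1 := by rw [hφ]; linarith
  have hφid : φ ^ 2 + φ = 1 := by rw [hφ]; field_simp; nlinarith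
  set c : ℝ := T m p with hc
  have hc0 : 0 ≤ c := T_nonneg m p hp0 hp1
  have hcφ : c < φ := hm
  have hc1 : c < 1 := lt_trans hcφ hφ1
  have hccc : 0 < 1 - c - c ^ 2 := by nlinarith
  set q : ℝ := 1 - (1 - c) * (1 - c - c ^ 2) with hq
  have hq0 : 0 ≤ q := by rw [hq]; nlinarith
  have hq1 : q < 1 := by rw [hq]; nlinarith
  have hstep : ∀ x : ℝ, 0 ≤ x → x ≤ c → 2 * x ^ 2 - x ^ 4 ≤ q * x := by
    intro x hx0 hxc
    have hfac : (1 - c) * (1 - c - c ^ 2) ≤ (1 - x) * (1 - x - x ^ 2) := by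
      have h1 : 1 - c ≤ 1 - x := by linarith
      have h2 : 1 - c - c ^ 2 ≤ 1 - x - x ^ 2 := by nlinarith
      exact mul_le_mul h1 h2 (le_of_lt hccc) (by linarith)
    nlinarith [mul_le_mul_of_nonneg_left hfac hx0]
  have hind : ∀ k : ℕ, T (m + k) p ≤ c * q ^ k := by
    intro k
    induction k with
    | zero => simp [hc]
    | succ k ih =>
      have hx0 : 0 ≤ T (m + k) p := T_nonneg _ p hp0 hp1
      have hqk1 : q ^ k ≤ 1 := pow_le_one₀ hq0 (le_of_lt hq1)
      have hxc : T (m + k) p ≤ c := le_trans ih (by nlinarith)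
      have h1 : T (m + k + 1) p ≤ 2 * (T (m + k) p) ^ 2 - (T (m + k) p) ^ 4 :=
        T_succ_le (m + k) p hp0 hp1
      have h2 : 2 * (T (m + k) p) ^ 2 - (T (m + k) p) ^ 4 ≤ q * T (m + k) p :=
        hstep _ hx0 hxc
      have h3 : q * T (m + k) p ≤ q * (c * q ^ k) := mul_le_mul_of_nonneg_left ih hq0
      calc T (m + (k + 1)) p = T (m + k + 1) p := by ring_nf
        _ ≤ q * (c * q ^ k) := le_trans h1 (le_trans h2 h3)
        _ = c * q ^ (k + 1) := by ring
  have hub : ∀ᶠ n in atTop, T n p ≤ c * q ^ (n - m) := by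
    filter_upwards [eventually_ge_atTop m] with n hn
    have := hind (n - m)
    rwa [show m + (n - m) = n by omega] at this
  have hlb : ∀ᶠ n in atTop, (0:ℝ) ≤ T n p :=
    Filter.Eventually.of_forall (fun n => T_nonneg n p hp0 hp1)
  have htend : Tendsto (fun n : ℕ => c * q ^ (n - m)) atTop (𝓝 0) := by
    have h1 : Tendsto (fun k : ℕ => q ^ k) atTop (𝓝 0) :=
      tendsto_pow_atTop_nhds_zero_of_lt_one hq0 hq1
    have h2 : Tendsto (fun n : ℕ => n - m) atTop atTop := tendsto_sub_atTop_nat m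
    have h3 := (h1.comp h2).const_mul c
    simpa using h3
  exact tendsto_of_tendsto_of_tendsto_of_le_of_le' tendsto_const_nhds htend hlb hub

end
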